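/- Let Γ be a group generated by a finite symmetric set S and let Z = Z(Γ) be its center. The map sending a coset gZ to the tuple (g⁻¹sg)_{s∈S} ∈ ∏_{s∈S} Cl(s) is well defined and injective. Moreover, if gZ contains a representative of length ≤ n, then g⁻¹sg ∈ B_{2n+1} for every s ∈ S; hence |B̄_n(Γ/Z)| ≤ ∏_{s∈S} |Cl(s) ∩ B_{2n+1}|. -/
import Mathlib

def wordBall {Γ : Type*} [Group Γ] (S : Set Γ) (n : ℕ) : Set Γ :=
  {g | ∃ l : List Γ, l.length ≤ n ∧ (∀ x ∈ l, x ∈ S) ∧ l.prod = g}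

noncomputable def wlen {Γ : Type*} [Group Γ] (S : Set Γ) (g : Γ) : ℕ :=
  sInf {n | g ∈ wordBall S n}

def conjClass {Γ : Type*} [Group Γ] (h : Γ) : Set Γ := {y | ∃ g : Γ, g⁻¹ * h * g = y}

noncomputable def cosetLen {Γ : Type*} [Group Γ] (S : Set Γ) (C : Subgroup Γ)
    (x : Γ ⧸ C) : ℕ :=
  sInf {n | ∃ g : Γ, (QuotientGroup.mk g : Γ ⧸ C) = x ∧ wlen S g ≤ n}

def schreierBall {Γ : Type*} [Group Γ] (S : Set Γ) (C : Subgroup Γ) (n : ℕ) :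
    Set (Γ ⧸ C) := {x | cosetLen S C x ≤ n}

section Aux

variable {Γ : Type*} [Group Γ]

lemma wordBall_mono {S : Set Γ} {m n : ℕ} (h : m ≤ n) : wordBall S m ⊆ wordBall S n :=
  fun _ ⟨l, hl, hS, hp⟩ => ⟨l, hl.trans h, hS, hp⟩

lemma exists_wordBall {S : Set Γ} (hsym : S⁻¹ = S) (hgen : Subgroup.closure S = ⊤)
    (g : Γ) : ∃ n, g ∈ wordBall S n := by
  have hg : g ∈ Submonoid.closure S := by
    have h1 : g ∈ (Subgroup.closure S).toSubmonoid := by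
      rw [hgen]; trivial
    rwa [Subgroup.closure_toSubmonoid, hsym, Set.union_self] at h1
  obtain ⟨l, hl, hp⟩ := Submonoid.exists_list_of_mem_closure hg
  exact ⟨l.length, l, le_rfl, hl, hp⟩

lemma mem_wordBall_of_wlen_le {S : Set Γ} (hsym : S⁻¹ = S)
    (hgen : Subgroup.closure S = ⊤) {g : Γ} {n : ℕ} (h : wlen S g ≤ n) :
    g ∈ wordBall S n :=
  wordBall_mono h (Nat.sInf_mem (exists_wordBall hsym hgen g))

lemma mul_mem_wordBall {S : Set Γ} {a b : Γ} {m n : ℕ}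
    (ha : a ∈ wordBall S m) (hb : b ∈ wordBall S n) : a * b ∈ wordBall S (m + n) := by
  obtain ⟨l, hl, hS, rfl⟩ := ha
  obtain ⟨l', hl', hS', rfl⟩ := hb
  refine ⟨l ++ l', by simpa using Nat.add_le_add hl hl', ?_, by simp⟩
  intro x hx; rcases List.mem_append.1 hx with h | h
  · exact hS x h
  · exact hS' x h

lemma inv_mem_wordBall {S : Set Γ} (hsym : S⁻¹ = S) {a : Γ} {m : ℕ}
    (ha : a ∈ wordBall S m) : a⁻¹ ∈ wordBall S m := by
  obtain ⟨l, hl, hS, rfl⟩ := ha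
  refine ⟨(l.map (·⁻¹)).reverse, by simpa using hl, ?_, ?_⟩
  · intro x hx
    simp only [List.mem_reverse, List.mem_map] at hx
    obtain ⟨y, hy, rfl⟩ := hx
    rw [← hsym]; simpa using hS y hy
  · rw [List.prod_reverse_noncomm]
    simp

lemma wordBall_finite (S : Finset Γ) (n : ℕ) : (wordBall (S : Set Γ) n).Finite := by
  induction n with
  | zero =>
    apply Set.Finite.subset (Set.finite_singleton 1)
    rintro g ⟨l, hl, _, rfl⟩
    simp only [Nat.le_zero, List.length_eq_zero_iff] at hl
    simp [hl]
  | succ n ih =>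
    have hsub : wordBall (S : Set Γ) (n + 1) ⊆
        wordBall (S : Set Γ) n ∪ ⋃ s ∈ (S : Set Γ), (s * ·) '' wordBall (S : Set Γ) n := by
      rintro g ⟨l, hl, hS, rfl⟩
      match l with
      | [] => exact Or.inl ⟨[], by simp, by simp, rfl⟩
      | a :: t =>
        right
        refine Set.mem_biUnion (hS a (by simp)) ⟨t.prod, ⟨t, ?_, ?_, rfl⟩, by simp⟩
        · simpa using Nat.succ_le_succ_iff.mp hl
        · intro x hx; exact hS x (List.mem_cons_of_mem _ hx)
    exact Set.Finite.subset (ih.union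
      (Set.Finite.biUnion S.finite_toSet fun s _ => ih.image _)) hsub

lemma mem_center_of_comm {S : Finset Γ} (hgen : Subgroup.closure (S : Set Γ) = ⊤)
    {d : Γ} (h : ∀ s ∈ S, d * s = s * d) : d ∈ Subgroup.center Γ := by
  rw [Subgroup.mem_center_iff]
  intro g
  have hS : (S : Set Γ) ⊆ (Subgroup.centralizer {d} : Set Γ) := by
    intro s hs
    rw [SetLike.mem_coe, Subgroup.mem_centralizer_singleton_iff]
    exact (h s hs).symm
  have hle : (⊤ : Subgroup Γ) ≤ Subgroup.centralizer {d} := by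
    rw [← hgen]; exact (Subgroup.closure_le _).2 hS
  have hg := hle (Subgroup.mem_top g)
  rw [Subgroup.mem_centralizer_singleton_iff] at hg
  exact hg

end Aux

/-- The map `gZ ↦ (g⁻¹ s g)_{s ∈ S}` on `Γ/Z(Γ)` is well defined and injective
(first clause); a coset with a representative of length `≤ n` is sent into
`∏_{s ∈ S} B_{2n+1}` (second clause); hence the Schreier ball of `Γ/Z(Γ)` is at
most as large as `∏_{s ∈ S} |Cl(s) ∩ B_{2n+1}|` (third clause). -/
theorem stmt3 (Γ : Type*) [Group Γ] (S : Finset Γ) (hsym : (S : Set Γ)⁻¹ = (S : Set Γ))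
    (hgen : Subgroup.closure (S : Set Γ) = ⊤) :
    (∀ a b : Γ,
      (QuotientGroup.mk a : Γ ⧸ Subgroup.center Γ) = QuotientGroup.mk b ↔
        ∀ s ∈ S, a⁻¹ * s * a = b⁻¹ * s * b) ∧
    (∀ (g : Γ) (n : ℕ),
      (∃ z ∈ Subgroup.center Γ, wlen (S : Set Γ) (g * z) ≤ n) →
        ∀ s ∈ S, g⁻¹ * s * g ∈ wordBall (S : Set Γ) (2 * n + 1)) ∧
    (∀ n : ℕ,
      (schreierBall (S : Set Γ) (Subgroup.center Γ) n).ncard ≤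
        ∏ s ∈ S, (conjClass s ∩ wordBall (S : Set Γ) (2 * n + 1)).ncard) := by
  classical
  have conj_iff : ∀ a b s : Γ, (a⁻¹ * s * a = b⁻¹ * s * b ↔ s * (a * b⁻¹) = (a * b⁻¹) * s) := by
    intro a b s
    constructor
    · intro h
      have := congrArg (fun x => a * x * b⁻¹) h
      simpa [mul_assoc] using this
    · intro h
      have := congrArg (fun x => a⁻¹ * x * b) h
      simpa [mul_assoc] using this
  have part1 : ∀ a b : Γ,
      (QuotientGroup.mk a : Γ ⧸ Subgroup.center Γ) = QuotientGroup.mk b ↔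
        ∀ s ∈ S, a⁻¹ * s * a = b⁻¹ * s * b := by
    intro a b
    rw [QuotientGroup.eq]
    constructor
    · intro hz s _
      have h1 : (a⁻¹ * b)⁻¹ ∈ Subgroup.center Γ := (Subgroup.center Γ).inv_mem hz
      have h2 : a * (a⁻¹ * b)⁻¹ * a⁻¹ ∈ Subgroup.center Γ :=
        Subgroup.Normal.conj_mem inferInstance _ h1 a
      have h3 : a * (a⁻¹ * b)⁻¹ * a⁻¹ = a * b⁻¹ := by group
      rw [h3] at h2
      exact (conj_iff a b s).2 (Subgroup.mem_center_iff.mp h2 s)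
    · intro h
      have hd : a * b⁻¹ ∈ Subgroup.center Γ :=
        mem_center_of_comm hgen fun s hs => ((conj_iff a b s).1 (h s hs)).symm
      have h1 : (a * b⁻¹)⁻¹ ∈ Subgroup.center Γ := (Subgroup.center Γ).inv_mem hd
      have h2 : a⁻¹ * (a * b⁻¹)⁻¹ * a⁻¹⁻¹ ∈ Subgroup.center Γ :=
        Subgroup.Normal.conj_mem inferInstance _ h1 a⁻¹
      have h3 : a⁻¹ * (a * b⁻¹)⁻¹ * a⁻¹⁻¹ = a⁻¹ * b := by group
      rwa [h3] at h2
  have part2 : ∀ (g : Γ) (n : ℕ),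
      (∃ z ∈ Subgroup.center Γ, wlen (S : Set Γ) (g * z) ≤ n) →
        ∀ s ∈ S, g⁻¹ * s * g ∈ wordBall (S : Set Γ) (2 * n + 1) := by
    rintro g n ⟨z, hzc, hlen⟩ s hs
    have h1 : g * z ∈ wordBall (S : Set Γ) n := mem_wordBall_of_wlen_le hsym hgen hlen
    have hsmem : s ∈ wordBall (S : Set Γ) 1 := ⟨[s], by simp, by simp [hs], by simp⟩
    have h2 : (g * z)⁻¹ * s * (g * z) ∈ wordBall (S : Set Γ) (n + 1 + n) :=
      mul_mem_wordBall (mul_mem_wordBall (inv_mem_wordBall hsym h1) hsmem) h1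
    have hzcomm : ∀ g' : Γ, g' * z = z * g' := Subgroup.mem_center_iff.mp hzc
    have heq : (g * z)⁻¹ * s * (g * z) = g⁻¹ * s * g := by
      calc (g * z)⁻¹ * s * (g * z) = z⁻¹ * ((g⁻¹ * s * g) * z) := by group
        _ = z⁻¹ * (z * (g⁻¹ * s * g)) := by rw [hzcomm]
        _ = g⁻¹ * s * g := by group
    have harith : n + 1 + n = 2 * n + 1 := by ring
    rw [← heq, ← harith]
    exact h2
  refine ⟨part1, part2, ?_⟩
  intro n
  have hrep : ∀ x : Γ ⧸ Subgroup.center Γ, ∃ g : Γ,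
      (QuotientGroup.mk g : Γ ⧸ Subgroup.center Γ) = x ∧
        wlen (S : Set Γ) g ≤ cosetLen (S : Set Γ) (Subgroup.center Γ) x := by
    intro x
    have hne : {m | ∃ g : Γ, (QuotientGroup.mk g : Γ ⧸ Subgroup.center Γ) = x ∧
        wlen (S : Set Γ) g ≤ m}.Nonempty := by
      obtain ⟨g, rfl⟩ := QuotientGroup.mk_surjective x
      exact ⟨wlen (S : Set Γ) g, g, rfl, le_rfl⟩
    exact Nat.sInf_mem hne
  choose rep hrep1 hrep2 using hrep
  set B := wordBall (S : Set Γ) (2 * n + 1) with hB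
  set t : ↥S → Set Γ := fun s => conjClass (s : Γ) ∩ B with ht
  set T : Set (↥S → Γ) := Set.pi Set.univ t with hT
  have htfin : ∀ s : ↥S, (t s).Finite := fun s =>
    Set.Finite.inter_of_right (wordBall_finite S (2 * n + 1)) _
  have hTfin : T.Finite := Set.Finite.pi htfin
  set f : (Γ ⧸ Subgroup.center Γ) → (↥S → Γ) :=
    fun x s => (rep x)⁻¹ * s * rep x with hf
  have himg : f '' schreierBall (S : Set Γ) (Subgroup.center Γ) n ⊆ T := by
    rintro _ ⟨x, hx, rfl⟩
    intro s _
    refine ⟨⟨rep x, rfl⟩, ?_⟩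
    exact part2 (rep x) n ⟨1, (Subgroup.center Γ).one_mem, by
      simpa using (hrep2 x).trans hx⟩ s s.2
  have hinj : Set.InjOn f (schreierBall (S : Set Γ) (Subgroup.center Γ) n) := by
    intro x _ y _ hxy
    have hcong : ∀ s ∈ S, (rep x)⁻¹ * s * rep x = (rep y)⁻¹ * s * rep y := by
      intro s hs
      exact congrFun hxy ⟨s, hs⟩
    have := (part1 (rep x) (rep y)).2 hcong
    rw [hrep1 x, hrep1 y] at this
    exact this
  calc (schreierBall (S : Set Γ) (Subgroup.center Γ) n).ncard
      = (f '' schreierBall (S : Set Γ) (Subgroup.center Γ) n).ncard :=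
        (Set.ncard_image_of_injOn hinj).symm
    _ ≤ T.ncard := Set.ncard_le_ncard himg hTfin
    _ = ∏ s : ↥S, (t s).ncard := by
        rw [← Nat.card_coe_set_eq, Nat.card_congr (Equiv.Set.univPi t), Nat.card_pi]
        exact Finset.prod_congr rfl fun s _ => Nat.card_coe_set_eq _
    _ = ∏ s ∈ S, (conjClass s ∩ B).ncard :=
        Finset.prod_coe_sort S (fun s => (conjClass s ∩ B).ncard)
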